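/- Let q ∈ (1, ∞) and let δ be an Orlicz function with δ(t) ≥ c·t^q for all t ∈ [0, 1], for some constant c > 0. Define norms N_k^δ on ℝ^k inductively by N_1^δ(x) = |x|, N_2^δ(x,y) = |x|(1 + δ(|y|/|x|)) for x ≠ 0, N_2^δ(0,y) = |y|, and N_k^δ(x_1, …, x_k) = N_2^δ(N_{k-1}^δ(x_1, …, x_{k-1}), x_k) for k ≥ 3. Then there exists a constant a > 0 depending only on c and q such that for every k ≥ 1 and every v ∈ ℝ^k, N_k^δ(v) ≥ a ‖v‖_{ℓ_q^k}. -/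

import Mathlib

/-- `N₂^δ(x,y) = |x|(1 + δ(|y|/|x|))` for `x ≠ 0`, `N₂^δ(0,y) = |y|`. -/
noncomputable def N2 (δ : ℝ → ℝ) (x y : ℝ) : ℝ :=
  if x = 0 then |y| else |x| * (1 + δ (|y| / |x|))

/-- Iterated norms: `Nk δ k v` is `N_{k+1}^δ(v₀,…,v_k)`. -/
noncomputable def Nk (δ : ℝ → ℝ) : (k : ℕ) → (Fin (k + 1) → ℝ) → ℝ
  | 0, v => |v 0|
  | k + 1, v => N2 δ (Nk δ k (fun i => v i.castSucc)) (v (Fin.last (k + 1)))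

/-- Subadditivity of `x ↦ x^p` for `0 ≤ p ≤ 1` on nonnegative reals. -/
lemma add_rpow_le_rpow_add' (x y p : ℝ) (hx : 0 ≤ x) (hy : 0 ≤ y)
    (hp0 : 0 ≤ p) (hp1 : p ≤ 1) : (x + y) ^ p ≤ x ^ p + y ^ p := by
  lift x to NNReal using hx
  lift y to NNReal using hy
  have := NNReal.rpow_add_le_add_rpow x y hp0 hp1
  exact_mod_cast this

/-- On `[1,∞)` a convex function vanishing at `0` dominates `t δ(1)`. -/
lemma convex_lower (δ : ℝ → ℝ) (hconv : ConvexOn ℝ (Set.Ici 0) δ)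
    (h0 : δ 0 = 0) (t : ℝ) (ht : 1 ≤ t) : t * δ 1 ≤ δ t := by
  rcases eq_or_lt_of_le ht with h | h
  · simp [← h]
  have htpos : (0 : ℝ) < t := lt_trans one_pos h
  have h1 : δ ((1 - 1/t) • (0:ℝ) + (1/t) • t) ≤ (1 - 1/t) * δ 0 + (1/t) * δ t := by
    refine hconv.2 (Set.mem_Ici.2 le_rfl) (Set.mem_Ici.2 htpos.le) ?_ ?_ ?_
    · have : 1/t ≤ 1 := by
        rw [div_le_one htpos]; exact ht
      linarith
    · positivity
    · ring
  have h2 : (1 - 1/t) • (0:ℝ) + (1/t) • t = 1 := by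
    rw [smul_zero, zero_add, smul_eq_mul, one_div_mul_cancel htpos.ne']
  rw [h2, h0] at h1
  have h3 : δ 1 ≤ (1/t) * δ t := by linarith
  calc t * δ 1 ≤ t * ((1/t) * δ t) := mul_le_mul_of_nonneg_left h3 htpos.le
    _ = δ t := by field_simp

/-- `N2` takes nonnegative values when `δ` is nonnegative on nonnegatives. -/
lemma N2_nonneg (δ : ℝ → ℝ) (hδ : ∀ t : ℝ, 0 ≤ t → 0 ≤ δ t) (x y : ℝ) :
    0 ≤ N2 δ x y := by
  unfold N2
  split
  · exact abs_nonneg _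
  · apply mul_nonneg (abs_nonneg _)
    have h := hδ (|y| / |x|) (by positivity)
    linarith

/-- Kalton's lower `ℓ_q` estimate: if `δ` is an Orlicz function with `δ(t) ≥ c·t^q` on
`[0,1]`, then `N_k^δ(v) ≥ a‖v‖_{ℓ_q^k}` for a constant `a > 0` depending only on `c`
and `q`. -/
theorem stmt_14 (q : ℝ) (hq : 1 < q) (c : ℝ) (hc : 0 < c) :
    ∃ a : ℝ, 0 < a ∧ ∀ δ : ℝ → ℝ,
      ConvexOn ℝ (Set.Ici 0) δ → MonotoneOn δ (Set.Ici 0) →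
      ContinuousOn δ (Set.Ici 0) → δ 0 = 0 → (∀ t > (0 : ℝ), 0 < δ t) →
      (∀ t ∈ Set.Icc (0 : ℝ) 1, c * t ^ q ≤ δ t) →
      ∀ k : ℕ, ∀ v : Fin (k + 1) → ℝ,
        a * (∑ i, |v i| ^ q) ^ (1 / q) ≤ Nk δ k v := by
  have hq0 : (0 : ℝ) < q := lt_trans one_pos hq
  have hqne : q ≠ 0 := hq0.ne'
  set a : ℝ := min 1 (min c (c ^ (1/q))) with ha_def
  have ha_pos : 0 < a := by
    apply lt_min one_pos
    exact lt_min hc (Real.rpow_pos_of_pos hc _)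
  have ha1 : a ≤ 1 := min_le_left _ _
  have hac : a ≤ c := le_trans (min_le_right _ _) (min_le_left _ _)
  have haq : a ^ q ≤ c := by
    have h1 : a ≤ c ^ (1/q) := le_trans (min_le_right _ _) (min_le_right _ _)
    calc a ^ q ≤ (c ^ (1/q)) ^ q := Real.rpow_le_rpow ha_pos.le h1 hq0.le
      _ = c := by
        rw [← Real.rpow_mul hc.le, one_div_mul_cancel hqne, Real.rpow_one]
  have haq_pos : 0 < a ^ q := Real.rpow_pos_of_pos ha_pos _
  have haq1 : a ^ q ≤ 1 := Real.rpow_le_one ha_pos.le ha1 hq0.le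
  refine ⟨a, ha_pos, ?_⟩
  intro δ hconv hmono hcont h0 hpos hlow k v
  -- δ is nonnegative on [0,∞)
  have hδnn : ∀ t : ℝ, 0 ≤ t → 0 ≤ δ t := by
    intro t ht
    rcases eq_or_lt_of_le ht with h | h
    · simp [← h, h0]
    · exact (hpos t h).le
  have hδ1 : c ≤ δ 1 := by
    have := hlow 1 ⟨zero_le_one, le_rfl⟩
    simpa using this
  -- key pointwise inequality
  have hkey : ∀ t : ℝ, 0 ≤ t → (1 + a ^ q * t ^ q) ^ (1/q) ≤ 1 + δ t := by
    intro t ht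
    rcases le_or_gt t 1 with h1 | h1
    · have hb : (1 : ℝ) ≤ 1 + a ^ q * t ^ q := by
        have : 0 ≤ a ^ q * t ^ q := by positivity
        linarith
      calc (1 + a ^ q * t ^ q) ^ (1/q) ≤ (1 + a ^ q * t ^ q) ^ (1:ℝ) := by
            apply Real.rpow_le_rpow_of_exponent_le hb
            rw [div_le_one hq0]; exact hq.le
        _ = 1 + a ^ q * t ^ q := Real.rpow_one _
        _ ≤ 1 + c * t ^ q := by
            have : a ^ q * t ^ q ≤ c * t ^ q := by
              apply mul_le_mul_of_nonneg_right haq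
              positivity
            linarith
        _ ≤ 1 + δ t := by
            have := hlow t ⟨ht, h1⟩
            linarith
    · have hat : (0:ℝ) ≤ a * t := by positivity
      calc (1 + a ^ q * t ^ q) ^ (1/q)
          ≤ 1 ^ (1/q) + (a ^ q * t ^ q) ^ (1/q) := by
            apply add_rpow_le_rpow_add' _ _ _ zero_le_one (by positivity)
              (by positivity)
            rw [div_le_one hq0]; exact hq.le
        _ = 1 + a * t := by
            rw [Real.one_rpow, ← Real.mul_rpow ha_pos.le ht,
              ← Real.rpow_mul hat, mul_one_div_cancel hqne, Real.rpow_one]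
        _ ≤ 1 + c * t := by
            have : a * t ≤ c * t := mul_le_mul_of_nonneg_right hac
              (le_trans zero_le_one h1.le)
            linarith
        _ ≤ 1 + δ t := by
            have h3 : t * c ≤ t * δ 1 :=
              mul_le_mul_of_nonneg_left hδ1 (le_trans zero_le_one h1.le)
            have h4 := convex_lower δ hconv h0 t h1.le
            nlinarith
  -- Nk is nonnegative
  have hNk_nn : ∀ k (v : Fin (k+1) → ℝ), 0 ≤ Nk δ k v := by
    intro k
    induction k with
    | zero => intro v; exact abs_nonneg _
    | succ n ih =>
      intro v
      exact N2_nonneg δ hδnn _ _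
  -- main induction: a^q * Σ |v i|^q ≤ (Nk δ k v)^q
  have main : ∀ k (v : Fin (k+1) → ℝ),
      a ^ q * (∑ i, |v i| ^ q) ≤ (Nk δ k v) ^ q := by
    intro k
    induction k with
    | zero =>
      intro v
      show a ^ q * (∑ i : Fin 1, |v i| ^ q) ≤ |v 0| ^ q
      rw [Fin.sum_univ_one]
      calc a ^ q * |v 0| ^ q ≤ 1 * |v 0| ^ q := by
            apply mul_le_mul_of_nonneg_right haq1; positivity
        _ = |v 0| ^ q := one_mul _
    | succ n ih =>
      intro v
      set S : ℝ := Nk δ n (fun i => v i.castSucc) with hS_def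
      have hS_nn : 0 ≤ S := hNk_nn n _
      set y : ℝ := v (Fin.last (n+1)) with hy_def
      have hIH := ih (fun i => v i.castSucc)
      have hsum : (∑ i : Fin (n+2), |v i| ^ q)
          = (∑ i : Fin (n+1), |v i.castSucc| ^ q) + |y| ^ q := by
        rw [Fin.sum_univ_castSucc]
      show a ^ q * (∑ i : Fin (n+2), |v i| ^ q) ≤ (N2 δ S y) ^ q
      rw [hsum, mul_add]
      rcases eq_or_ne S 0 with hS0 | hS0
      · have hSq : S ^ q = 0 := by rw [hS0, Real.zero_rpow hqne]
        have hsc : a ^ q * (∑ i : Fin (n+1), |v i.castSucc| ^ q) ≤ 0 := by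
          rw [← hSq]; exact hIH
        have hN2 : N2 δ S y = |y| := by rw [N2, if_pos hS0]
        rw [hN2]
        have : a ^ q * |y| ^ q ≤ 1 * |y| ^ q := by
          apply mul_le_mul_of_nonneg_right haq1; positivity
        linarith [this]
      · have hS_pos : 0 < S := lt_of_le_of_ne hS_nn (Ne.symm hS0)
        have hN2 : N2 δ S y = S * (1 + δ (|y| / S)) := by
          rw [N2, if_neg hS0, abs_of_pos hS_pos]
        rw [hN2]
        set t : ℝ := |y| / S with ht_def
        have ht_nn : 0 ≤ t := by positivity
        have hδt : 0 ≤ δ t := hδnn t ht_nn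
        have hb_nn : (0:ℝ) ≤ 1 + a ^ q * t ^ q := by positivity
        have key_q : 1 + a ^ q * t ^ q ≤ (1 + δ t) ^ q := by
          have h5 := Real.rpow_le_rpow (by positivity) (hkey t ht_nn) hq0.le
          rwa [← Real.rpow_mul hb_nn, one_div_mul_cancel hqne,
            Real.rpow_one] at h5
        have hSt : S * t = |y| := by
          rw [ht_def]; field_simp
        have hStq : S ^ q * t ^ q = |y| ^ q := by
          rw [← Real.mul_rpow hS_nn ht_nn, hSt]
        calc a ^ q * (∑ i : Fin (n+1), |v i.castSucc| ^ q) + a ^ q * |y| ^ q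
            ≤ S ^ q + a ^ q * |y| ^ q := by linarith
          _ = S ^ q * (1 + a ^ q * t ^ q) := by
              rw [mul_add, mul_one, ← mul_assoc, mul_comm (S ^ q) (a ^ q),
                mul_assoc, hStq]
          _ ≤ S ^ q * (1 + δ t) ^ q := by
              apply mul_le_mul_of_nonneg_left key_q
              positivity
          _ = (S * (1 + δ t)) ^ q := by
              rw [Real.mul_rpow hS_nn (by linarith)]
  have h := main k v
  have hsum_nn : 0 ≤ ∑ i : Fin (k+1), |v i| ^ q :=
    Finset.sum_nonneg fun i _ => by positivity
  have hlhs_nn : 0 ≤ a ^ q * (∑ i, |v i| ^ q) := by positivity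
  have h2 := Real.rpow_le_rpow hlhs_nn h (by positivity : (0:ℝ) ≤ 1/q)
  rwa [Real.mul_rpow (by positivity) hsum_nn,
    ← Real.rpow_mul ha_pos.le, mul_one_div_cancel hqne, Real.rpow_one,
    ← Real.rpow_mul (hNk_nn k v), mul_one_div_cancel hqne, Real.rpow_one] at h2
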